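/- arXiv:1712.05674 — 2 statements merged into one kernel-verified Lean document; each statement's English description precedes it below -/
import Mathlib

section
/- Let N, L, K be positive integers, T = {f_1,...,f_K} ⊂ [0,1) distinct, c_k > 0, φ_k ∈ ℂ^{1×L} with ‖φ_k‖₂ = 1 for k = 1,...,K, and Ω ⊆ {1,...,N}. Set Y^o = Σ_{k=1}^K c_k a(f_k) φ_k. Suppose that the vectors {a_Ω(f_k)}_{k=1}^K are linearly independent and that there exists a matrix V ∈ ℂ^{N×L} such that the vector-valued polynomial Q(f) = a(f)ᴴ V satisfies: (i) Q(f_k) = φ_k for every f_k ∈ T; (ii) ‖Q(f)‖₂ < 1 for every f ∈ [0,1) \ T; and (iii) the j-th row of V is zero for every j ∉ Ω. Then Y^o is the unique solution of min_{Y ∈ ℂ^{N×L}} ‖Y‖_A subject to Y_Ω = Y^o_Ω, and Y^o = Σ_{k=1}^K c_k a(f_k) φ_k is the unique atomic decomposition achieving the atomic norm, with ‖Y^o‖_A = Σ_{k=1}^K c_k. -/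
open MeasureTheory ProbabilityTheory Finset

noncomputable section

/-- Euclidean norm of a finite complex vector. -/
def vnorm {ι : Type*} [Fintype ι] (x : ι → ℂ) : ℝ :=
  Real.sqrt (∑ i, Complex.normSq (x i))

/-- The atom `a(f) = (1, e^{2πif}, …, e^{2πi(N-1)f})`. -/
def atom (N : ℕ) (f : ℝ) : Fin N → ℂ :=
  fun j => Complex.exp (2 * Real.pi * Complex.I * f * (j : ℕ))

/-- Wrap-around distance on the unit circle `[0,1)`. -/
def wrapDist (x y : ℝ) : ℝ := min |x - y| (1 - |x - y|)

/-- Coefficients of the squared Fejér kernel. -/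
def gcoef (n : ℕ) (j : ℤ) : ℝ :=
  (1 / ((n : ℝ) + 1)) *
    ∑ k ∈ Finset.Icc (max (j - (n : ℤ) - 1) (-(n : ℤ) - 1)) (min (j + (n : ℤ) + 1) ((n : ℤ) + 1)),
      (1 - |(k : ℝ)| / ((n : ℝ) + 1)) * (1 - |((j - k : ℤ) : ℝ)| / ((n : ℝ) + 1))

/-- The partially observed squared Fejér kernel, with selection `sel`. -/
def fejerSel (n : ℕ) (sel : ℤ → Bool) (f : ℝ) : ℂ :=
  ∑ j ∈ Finset.Icc (-(2 * (n : ℤ))) (2 * (n : ℤ)),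
    (if sel j then (1 : ℂ) else 0) * (gcoef n j : ℂ) *
      Complex.exp (-(2 * Real.pi * Complex.I) * (j : ℤ) * f)

/-- The squared Fejér kernel (as a trigonometric polynomial). -/
def fejer (n : ℕ) : ℝ → ℂ := fejerSel n fun _ => true

/-- `l`-th derivative of the squared Fejér kernel. -/
def fejerD (n : ℕ) (l : ℕ) (f : ℝ) : ℂ := iteratedDeriv l (fejer n) f

/-- `l`-th derivative of the partially observed squared Fejér kernel. -/
def fejerSelD (n : ℕ) (sel : ℤ → Bool) (l : ℕ) (f : ℝ) : ℂ :=
  iteratedDeriv l (fejerSel n sel) f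

/-- The constant `c₀ = √(4π²n(n+2)/3) = √|K''(0)|`. -/
def c0 (n : ℕ) : ℝ := Real.sqrt (4 * Real.pi ^ 2 * n * (n + 2) / 3)

/-- The `2K × 2K` matrix built from a kernel-derivative function `κ l f`. -/
def Dgen {K : ℕ} (freq : Fin K → ℝ) (n : ℕ) (κ : ℕ → ℝ → ℂ) :
    Matrix (Fin K ⊕ Fin K) (Fin K ⊕ Fin K) ℂ :=
  fun r s =>
    match r, s with
    | .inl j, .inl k => κ 0 (freq j - freq k)
    | .inl j, .inr k => ((c0 n : ℝ) : ℂ)⁻¹ * κ 1 (freq j - freq k)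
    | .inr j, .inl k => -((c0 n : ℝ) : ℂ)⁻¹ * κ 1 (freq j - freq k)
    | .inr j, .inr k => -(((c0 n : ℝ) : ℂ)⁻¹) ^ 2 * κ 2 (freq j - freq k)

/-- The deterministic matrix `D`. -/
def Dmat {K : ℕ} (n : ℕ) (freq : Fin K → ℝ) : Matrix (Fin K ⊕ Fin K) (Fin K ⊕ Fin K) ℂ :=
  Dgen freq n (fejerD n)

/-- The random (partially observed) matrix `D̄`. -/
def DmatBar {K : ℕ} (n : ℕ) (freq : Fin K → ℝ) (sel : ℤ → Bool) :
    Matrix (Fin K ⊕ Fin K) (Fin K ⊕ Fin K) ℂ :=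
  Dgen freq n (fejerSelD n sel)

/-- Spectral norm (ℓ² operator norm) of a square complex matrix. -/
def specNorm {m : Type*} [Fintype m] [DecidableEq m] (A : Matrix m m ℂ) : ℝ :=
  ‖Matrix.toEuclideanCLM (𝕜 := ℂ) A‖

/-- First `K` columns of `D⁻¹`. -/
def Lcols {K : ℕ} (D : Matrix (Fin K ⊕ Fin K) (Fin K ⊕ Fin K) ℂ) :
    Matrix (Fin K ⊕ Fin K) (Fin K) ℂ :=
  fun i k => D⁻¹ i (Sum.inl k)

/-- The vector `v_l(f)` built from a kernel-derivative function `κ`. -/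
def vgen {K : ℕ} (freq : Fin K → ℝ) (n : ℕ) (κ : ℕ → ℝ → ℂ) (l : ℕ) (f : ℝ) :
    Fin K ⊕ Fin K → ℂ :=
  Sum.elim (fun k => ((((c0 n) ^ l)⁻¹ : ℝ) : ℂ) * (starRingEnd ℂ) (κ l (f - freq k)))
    (fun k => ((((c0 n) ^ (l + 1))⁻¹ : ℝ) : ℂ) * (starRingEnd ℂ) (κ (l + 1) (f - freq k)))

/-- The deterministic vector `v_l(f)`. -/
def vvec {K : ℕ} (n : ℕ) (freq : Fin K → ℝ) (l : ℕ) (f : ℝ) : Fin K ⊕ Fin K → ℂ :=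
  vgen freq n (fejerD n) l f

/-- The random vector `v̄_l(f)`. -/
def vvecBar {K : ℕ} (n : ℕ) (freq : Fin K → ℝ) (sel : ℤ → Bool) (l : ℕ) (f : ℝ) :
    Fin K ⊕ Fin K → ℂ :=
  vgen freq n (fejerSelD n sel) l f

/-- `Lᴴ x` for a `2K × K` matrix `L` and a `2K`-vector `x`. -/
def applyH {K : ℕ} (L : Matrix (Fin K ⊕ Fin K) (Fin K) ℂ) (x : Fin K ⊕ Fin K → ℂ) :
    Fin K → ℂ :=
  fun k => ∑ i, (starRingEnd ℂ) (L i k) * x i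

/-- The row vector `xᴴ L Φ ∈ ℂ^{1×L}`. -/
def quadForm {K L : ℕ} (x : Fin K ⊕ Fin K → ℂ) (Lm : Matrix (Fin K ⊕ Fin K) (Fin K) ℂ)
    (Φ : Fin K → Fin L → ℂ) : Fin L → ℂ :=
  fun a => ∑ k, (∑ i, (starRingEnd ℂ) (x i) * Lm i k) * Φ k a

/-- A probability measure on `ℂ^L` is the uniform distribution on the unit sphere iff it is
supported on the unit sphere and invariant under every unitary transformation. -/
def IsUniformOnSphere (L : ℕ) (ν : Measure (Fin L → ℂ)) : Prop :=
  IsProbabilityMeasure ν ∧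
  ν {x : Fin L → ℂ | ∑ i, Complex.normSq (x i) = 1}ᶜ = 0 ∧
  ∀ U : Matrix (Fin L) (Fin L) ℂ, U ∈ Matrix.unitaryGroup (Fin L) ℂ →
    ν.map (fun x i => ∑ j, U i j * x j) = ν

end
noncomputable section

/-- `(c, fr, φ)` is an atomic decomposition of `Y`. -/
def IsAtomicDecomp (N L : ℕ) (Y : Matrix (Fin N) (Fin L) ℂ) {m : ℕ}
    (c : Fin m → ℝ) (fr : Fin m → ℝ) (φ : Fin m → Fin L → ℂ) : Prop :=
  (∀ k, 0 < c k) ∧ (∀ k, fr k ∈ Set.Ico (0 : ℝ) 1) ∧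
  (∀ k, ∑ l, Complex.normSq (φ k l) = 1) ∧
  (∀ j l, Y j l = ∑ k, (c k : ℂ) * atom N (fr k) j * φ k l)

/-- The atomic norm of `Y ∈ ℂ^{N×L}`. -/
def atomicNorm (N L : ℕ) (Y : Matrix (Fin N) (Fin L) ℂ) : ℝ :=
  sInf {t : ℝ | ∃ (m : ℕ) (c fr : Fin m → ℝ) (φ : Fin m → Fin L → ℂ),
    IsAtomicDecomp N L Y c fr φ ∧ t = ∑ k, c k}

/-- Exact recovery: `Yo` is the unique solution of the atomic norm minimization problem with
observations on the rows indexed by `Ω`, its atomic norm equals `∑ c k`, and its atomic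
decomposition achieving the atomic norm is unique. -/
def ExactRecovery (N L K : ℕ) (f c : Fin K → ℝ) (φ : Fin K → Fin L → ℂ)
    (Ω : Finset (Fin N)) (Yo : Matrix (Fin N) (Fin L) ℂ) : Prop :=
  (∀ Y : Matrix (Fin N) (Fin L) ℂ, (∀ j ∈ Ω, ∀ l, Y j l = Yo j l) → Y ≠ Yo →
      atomicNorm N L Yo < atomicNorm N L Y) ∧
  atomicNorm N L Yo = ∑ k, c k ∧
  (∀ (m : ℕ) (c' fr' : Fin m → ℝ) (φ' : Fin m → Fin L → ℂ),
    IsAtomicDecomp N L Yo c' fr' φ' → Function.Injective fr' →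
    (∑ k, c' k) = ∑ k, c k →
    ∃ e : Fin m ≃ Fin K, ∀ k, fr' k = f (e k) ∧ c' k = c (e k) ∧ φ' k = φ (e k))

end


noncomputable section AuxDualCert
open Matrix Finset

lemma vnorm_nonneg' {ι : Type*} [Fintype ι] (x : ι → ℂ) : 0 ≤ vnorm x := Real.sqrt_nonneg _

lemma sum_normSq_nonneg' {ι : Type*} [Fintype ι] (x : ι → ℂ) :
    0 ≤ ∑ i, Complex.normSq (x i) := Finset.sum_nonneg fun i _ => Complex.normSq_nonneg _

lemma vnorm_sq' {ι : Type*} [Fintype ι] (x : ι → ℂ) :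
    vnorm x ^ 2 = ∑ i, Complex.normSq (x i) := Real.sq_sqrt (sum_normSq_nonneg' x)

lemma vnorm_eq_zero' {ι : Type*} [Fintype ι] {x : ι → ℂ} (h : vnorm x = 0) : x = 0 := by
  have h2 : ∑ i, Complex.normSq (x i) = 0 := by
    have := vnorm_sq' x; rw [h] at this; simpa using this.symm
  funext i
  have := (Finset.sum_eq_zero_iff_of_nonneg (fun i _ => Complex.normSq_nonneg (x i))).mp h2 i
    (Finset.mem_univ i)
  simpa [Complex.normSq_eq_zero] using this

lemma atom_eq' (N : ℕ) (g : ℝ) (j : Fin N) :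
    atom N g j = Complex.exp (((2 * Real.pi * g * j : ℝ) : ℂ) * Complex.I) := by
  unfold atom; push_cast; ring_nf

lemma abs_atom' (N : ℕ) (g : ℝ) (j : Fin N) : ‖atom N g j‖ = 1 := by
  rw [atom_eq']; exact Complex.norm_exp_ofReal_mul_I _

lemma cauchy_re' {L : ℕ} (x y : Fin L → ℂ) :
    (∑ l, (starRingEnd ℂ) (x l) * y l).re ≤ vnorm x * vnorm y := by
  let x' : EuclideanSpace ℂ (Fin L) := WithLp.toLp 2 x
  let y' : EuclideanSpace ℂ (Fin L) := WithLp.toLp 2 y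
  have hin : (inner ℂ x' y') = ∑ l, (starRingEnd ℂ) (x l) * y l := by
    rw [PiLp.inner_apply]; refine Finset.sum_congr rfl fun l _ => ?_
    simp [x', y', RCLike.inner_apply, mul_comm]
  have hn : ‖x'‖ = vnorm x := by
    rw [EuclideanSpace.norm_eq]; unfold vnorm; congr 1; apply Finset.sum_congr rfl
    intro i _; rw [Complex.sq_norm]
  have hn' : ‖y'‖ = vnorm y := by
    rw [EuclideanSpace.norm_eq]; unfold vnorm; congr 1; apply Finset.sum_congr rfl
    intro i _; rw [Complex.sq_norm]
  calc (∑ l, (starRingEnd ℂ) (x l) * y l).re = (inner ℂ x' y').re := by rw [hin]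
    _ ≤ ‖x'‖ * ‖y'‖ := by exact re_inner_le_norm (𝕜 := ℂ) x' y'
    _ = vnorm x * vnorm y := by rw [hn, hn']

lemma atom_pow' (N : ℕ) (q : Fin N) (j : Fin N) :
    atom N ((q : ℝ) / N) j = Complex.exp (2 * Real.pi * Complex.I * ((q : ℝ) / N)) ^ (j : ℕ) := by
  rw [← Complex.exp_nat_mul]
  unfold atom
  congr 1
  push_cast
  ring

lemma nodes_inj' (N : ℕ) (hN : 0 < N) :
    Function.Injective fun q : Fin N => Complex.exp (2 * Real.pi * Complex.I * ((q : ℝ) / N)) := by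
  intro q q' h
  rw [Complex.exp_eq_exp_iff_exists_int] at h
  obtain ⟨n, hn⟩ := h
  have h2 : (2 * Real.pi * Complex.I) ≠ 0 := by
    simp [Complex.ext_iff, Real.pi_ne_zero, Complex.I_ne_zero]
  have key : ((q : ℕ) : ℂ) / (N : ℂ) = ((q' : ℕ) : ℂ) / N + (n : ℂ) := by
    apply mul_left_cancel₀ h2
    push_cast at hn ⊢
    linear_combination hn
  have hNC : (N : ℂ) ≠ 0 := by
    exact_mod_cast Nat.cast_ne_zero.mpr hN.ne'
  have hqC : ((q : ℕ) : ℂ) = ((q' : ℕ) : ℂ) + (n : ℂ) * (N : ℂ) := by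
    field_simp at key
    linear_combination key
  have hZ : (q : ℤ) = (q' : ℤ) + n * N := by exact_mod_cast hqC
  have hb1 : (q : ℤ) < N := by exact_mod_cast q.isLt
  have hb2 : (q' : ℤ) < N := by exact_mod_cast q'.isLt
  have hb3 : 0 ≤ (q : ℤ) := by positivity
  have hb4 : 0 ≤ (q' : ℤ) := by positivity
  have hNZ : (0:ℤ) < N := by exact_mod_cast hN
  have hn0 : n = 0 := by
    rcases lt_trichotomy n 0 with h | h | h
    · exfalso
      have h1 : n ≤ -1 := by omega
      have h2 : n * N ≤ (-1) * N := mul_le_mul_of_nonneg_right h1 (le_of_lt hNZ)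
      linarith
    · exact h
    · exfalso
      have h1 : 1 ≤ n := by omega
      have h2 : (1:ℤ) * N ≤ n * N := mul_le_mul_of_nonneg_right h1 (le_of_lt hNZ)
      linarith
  have : (q : ℤ) = q' := by rw [hn0] at hZ; omega
  exact Fin.ext (by exact_mod_cast this)

lemma exists_decomp' (N L : ℕ) (hN : 0 < N) (hL : 0 < L) (Y : Matrix (Fin N) (Fin L) ℂ) :
    ∃ (m : ℕ) (c fr : Fin m → ℝ) (φ : Fin m → Fin L → ℂ), IsAtomicDecomp N L Y c fr φ := by
  classical
  set v : Fin N → ℂ := fun q => Complex.exp (2 * Real.pi * Complex.I * ((q : ℝ) / N)) with hv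
  set M : Matrix (Fin N) (Fin N) ℂ := fun j q => atom N ((q : ℝ) / N) j with hM
  have hMt : M = (Matrix.vandermonde v)ᵀ := by
    funext j q
    rw [Matrix.transpose_apply, Matrix.vandermonde_apply]
    exact atom_pow' N q j
  have hdet : M.det ≠ 0 := by
    rw [hMt, Matrix.det_transpose]
    rw [Matrix.det_vandermonde_ne_zero_iff]
    exact nodes_inj' N hN
  set ψ : Matrix (Fin N) (Fin L) ℂ := M⁻¹ * Y with hψ
  have hMψ : ∀ j l, Y j l = ∑ q : Fin N, atom N ((q : ℝ) / N) j * ψ q l := by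
    intro j l
    have : M * ψ = Y := by
      rw [hψ, ← Matrix.mul_assoc, Matrix.mul_nonsing_inv _ (isUnit_iff_ne_zero.mpr hdet),
        Matrix.one_mul]
    conv_lhs => rw [← this]
    rw [Matrix.mul_apply]
  set l0 : Fin L := ⟨0, hL⟩ with hl0
  set u : Fin L → ℂ := fun l => if l = l0 then 1 else 0 with hu
  have hunorm : ∑ l, Complex.normSq (u l) = 1 := by
    rw [hu]; simp [apply_ite Complex.normSq]
  set r : Fin N → ℝ := fun q => vnorm (fun l => ψ q l) + 1 with hr
  have hrpos : ∀ q, 0 < r q := fun q => by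
    have := vnorm_nonneg' (fun l => ψ q l); rw [hr]; dsimp; linarith
  set χ : Fin N → Fin L → ℂ := fun q l => ψ q l + (r q : ℂ) * u l with hχ
  have hχne : ∀ q, χ q ≠ 0 := by
    intro q hq0
    have hψe : (fun l => ψ q l) = fun l => -(r q : ℂ) * u l := by
      funext l
      have := congrFun hq0 l
      simp only [hχ, Pi.zero_apply] at this
      linear_combination this
    have : vnorm (fun l => ψ q l) = r q := by
      rw [hψe]
      have : ∑ l, Complex.normSq (-(r q : ℂ) * u l) = (r q)^2 := by
        simp only [Complex.normSq_mul]
        rw [← Finset.mul_sum, hunorm]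
        simp [Complex.normSq_ofReal]; ring
      unfold vnorm
      rw [this]
      exact Real.sqrt_sq (hrpos q).le
    rw [hr] at this; dsimp at this; linarith
  set c1 : Fin N → ℝ := fun q => vnorm (χ q) with hc1
  have hc1pos : ∀ q, 0 < c1 q := by
    intro q
    rcases lt_or_eq_of_le (vnorm_nonneg' (χ q)) with h | h
    · exact h
    · exact absurd (vnorm_eq_zero' h.symm) (hχne q)
  set φ1 : Fin N → Fin L → ℂ := fun q l => χ q l / (c1 q : ℂ) with hφ1
  have hφ1norm : ∀ q, ∑ l, Complex.normSq (φ1 q l) = 1 := by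
    intro q
    have hpos : 0 < vnorm (χ q) := hc1pos q
    simp only [hφ1, Complex.normSq_div]
    rw [← Finset.sum_div, ← vnorm_sq', Complex.normSq_ofReal]
    simp only [hc1, pow_two]
    exact div_self (ne_of_gt (mul_pos hpos hpos))
  refine ⟨N + N, fun k => Sum.elim c1 r (finSumFinEquiv.symm k),
    fun k => Sum.elim (fun q : Fin N => (q : ℝ) / N) (fun q : Fin N => (q : ℝ) / N)
      (finSumFinEquiv.symm k),
    fun k => Sum.elim φ1 (fun _ => fun l => -u l) (finSumFinEquiv.symm k), ?_, ?_, ?_, ?_⟩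
  · intro k
    obtain ⟨s, rfl⟩ : ∃ s, finSumFinEquiv s = k := ⟨finSumFinEquiv.symm k, by simp⟩
    simp only [Equiv.symm_apply_apply]
    cases s with
    | inl q => exact hc1pos q
    | inr q => exact hrpos q
  · intro k
    have hIco : ∀ q : Fin N, (q : ℝ) / N ∈ Set.Ico (0:ℝ) 1 := by
      intro q
      constructor
      · positivity
      · rw [div_lt_one (by exact_mod_cast hN)]; exact_mod_cast q.isLt
    obtain ⟨s, rfl⟩ : ∃ s, finSumFinEquiv s = k := ⟨finSumFinEquiv.symm k, by simp⟩
    simp only [Equiv.symm_apply_apply]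
    cases s with
    | inl q => exact hIco q
    | inr q => exact hIco q
  · intro k
    obtain ⟨s, rfl⟩ : ∃ s, finSumFinEquiv s = k := ⟨finSumFinEquiv.symm k, by simp⟩
    simp only [Equiv.symm_apply_apply]
    cases s with
    | inl q => exact hφ1norm q
    | inr q => simpa using hunorm
  · intro j l
    set G : Fin N ⊕ Fin N → ℂ := fun s =>
      ((Sum.elim c1 r s : ℝ) : ℂ) *
        atom N (Sum.elim (fun q : Fin N => (q:ℝ)/N) (fun q : Fin N => (q:ℝ)/N) s) j *
        Sum.elim φ1 (fun _ => fun l' => -u l') s l with hG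
    have step2 : ∑ s, G s = ∑ k : Fin (N+N), G (finSumFinEquiv.symm k) :=
      Fintype.sum_equiv finSumFinEquiv _ _ (fun s => by simp)
    rw [hMψ j l]
    have step1 : ∑ q : Fin N, atom N ((q:ℝ)/N) j * ψ q l = ∑ s, G s := by
      rw [Fintype.sum_sum_type]
      simp only [hG, Sum.elim_inl, Sum.elim_inr]
      rw [← Finset.sum_add_distrib]
      apply Finset.sum_congr rfl
      intro q _
      have hc1φ : (c1 q : ℂ) * φ1 q l = χ q l := by
        rw [hφ1]
        field_simp [Complex.ofReal_ne_zero.mpr (ne_of_gt (hc1pos q))]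
      calc atom N ((q:ℝ)/N) j * ψ q l
          = atom N ((q:ℝ)/N) j * (χ q l - (r q : ℂ) * u l) := by rw [hχ]; ring_nf
        _ = (c1 q : ℂ) * atom N ((q:ℝ)/N) j * φ1 q l +
            (r q : ℂ) * atom N ((q:ℝ)/N) j * (-u l) := by
            rw [mul_comm ((c1 q : ℝ) : ℂ), mul_assoc, hc1φ]; ring
    rw [step1, step2]

/-- The dual polynomial `Q(g) = a(g)ᴴ V` as a vector in `ℂ^L`. -/
def Qpoly (N L : ℕ) (V : Matrix (Fin N) (Fin L) ℂ) (g : ℝ) : Fin L → ℂ :=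
  fun l => ∑ j, (starRingEnd ℂ) (atom N g j) * V j l

/-- `ℓ¹`-distance between atoms. -/
def dAtom (N : ℕ) (g y : ℝ) : ℝ := ∑ i : Fin N, ‖atom N g i - atom N y i‖

lemma atom_continuous' (N : ℕ) (j : Fin N) : Continuous fun g : ℝ => atom N g j := by
  unfold atom
  apply Complex.continuous_exp.comp
  exact ((continuous_const.mul Complex.continuous_ofReal).mul continuous_const)

lemma dAtom_continuous' (N : ℕ) (y : ℝ) : Continuous fun g => dAtom N g y := by
  unfold dAtom
  apply continuous_finset_sum
  intro i _
  exact continuous_norm.comp ((atom_continuous' N i).sub continuous_const)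

lemma dAtom_self' (N : ℕ) (g : ℝ) : dAtom N g g = 0 := by
  unfold dAtom; simp

lemma vnormQ_continuous' (N L : ℕ) (V : Matrix (Fin N) (Fin L) ℂ) :
    Continuous fun g => vnorm (Qpoly N L V g) := by
  unfold vnorm Qpoly
  apply Real.continuous_sqrt.comp
  apply continuous_finset_sum
  intro l _
  apply Complex.continuous_normSq.comp
  apply continuous_finset_sum
  intro j _
  exact ((atom_continuous' N j).star).mul continuous_const

lemma atom_one_eq_zero' (N : ℕ) : atom N 1 = atom N 0 := by
  funext i
  unfold atom
  push_cast
  rw [mul_one]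
  have : 2 * (Real.pi : ℂ) * Complex.I * ((i : ℕ) : ℂ)
      = (((i : ℕ) : ℤ) : ℂ) * (2 * Real.pi * Complex.I) := by push_cast; ring
  rw [this, Complex.exp_int_mul_two_pi_mul_I]
  simp

lemma near_or_far' (N L K : ℕ) (V : Matrix (Fin N) (Fin L) ℂ) (f : Fin K → ℝ)
    (hQlt : ∀ g ∈ Set.Ico (0 : ℝ) 1, g ∉ Set.range f → vnorm (Qpoly N L V g) < 1)
    {δ : ℝ} (hδ : 0 < δ) :
    ∃ η > 0, ∀ g ∈ Set.Icc (0 : ℝ) 1,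
      (∀ p, δ ≤ dAtom N g (f p)) → η ≤ 1 - vnorm (Qpoly N L V g) := by
  classical
  set h : ℝ → ℝ := fun g => 1 - vnorm (Qpoly N L V g) with hh
  have hcont : Continuous h := continuous_const.sub (vnormQ_continuous' N L V)
  set S : Set ℝ := Set.Icc (0:ℝ) 1 ∩ ⋂ p, {g | δ ≤ dAtom N g (f p)} with hS
  have hSsub : S ⊆ Set.Icc 0 1 := Set.inter_subset_left
  have hclosed : IsClosed S := by
    apply IsClosed.inter isClosed_Icc
    apply isClosed_iInter
    intro p
    exact isClosed_le continuous_const (dAtom_continuous' N (f p))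
  have hcompact : IsCompact S := isCompact_Icc.of_isClosed_subset hclosed hSsub
  have hmemS : ∀ g ∈ Set.Icc (0:ℝ) 1, (∀ p, δ ≤ dAtom N g (f p)) → g ∈ S := by
    intro g hg hfar
    exact ⟨hg, Set.mem_iInter.mpr fun p => hfar p⟩
  have hposS : ∀ g ∈ S, 0 < h g := by
    intro g hgS
    obtain ⟨⟨hg0, hg1⟩, hfar⟩ := hgS
    have hfar' : ∀ p, δ ≤ dAtom N g (f p) := fun p => Set.mem_iInter.mp hfar p
    have hnotrange : ∀ g' ∈ Set.Ico (0:ℝ) 1, (∀ p, δ ≤ dAtom N g' (f p)) → g' ∉ Set.range f := by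
      rintro g' _ hfar'' ⟨p, rfl⟩
      have := hfar'' p
      rw [dAtom_self'] at this
      linarith
    rcases lt_or_eq_of_le hg1 with hlt | heq
    · have := hQlt g ⟨hg0, hlt⟩ (hnotrange g ⟨hg0, hlt⟩ hfar')
      simp only [hh]; linarith
    · subst heq
      have hQ10 : Qpoly N L V 1 = Qpoly N L V 0 := by
        unfold Qpoly; rw [atom_one_eq_zero']
      have hd10 : ∀ p, dAtom N 1 (f p) = dAtom N 0 (f p) := by
        intro p; unfold dAtom; rw [atom_one_eq_zero']
      have hfar0 : ∀ p, δ ≤ dAtom N 0 (f p) := fun p => (hd10 p) ▸ hfar' p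
      have h0 : (0:ℝ) ∈ Set.Ico (0:ℝ) 1 := ⟨le_refl _, one_pos⟩
      have := hQlt 0 h0 (hnotrange 0 h0 hfar0)
      simp only [hh, hQ10]; linarith
  by_cases hne : S.Nonempty
  · obtain ⟨g0, hg0S, hmin⟩ := hcompact.exists_isMinOn hne hcont.continuousOn
    refine ⟨h g0, hposS g0 hg0S, fun g hg hfar => ?_⟩
    exact isMinOn_iff.mp hmin g (hmemS g hg hfar)
  · refine ⟨1, one_pos, fun g hg hfar => absurd ⟨g, hmemS g hg hfar⟩ hne⟩

lemma antilip' (N K : ℕ) (f : Fin K → ℝ) (Ω : Finset (Fin N))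
    (hLI : LinearIndependent ℂ fun k : Fin K => fun j : {j : Fin N // j ∈ Ω} =>
      atom N (f k) (j : Fin N)) :
    ∃ C : ℝ, 0 < C ∧ ∀ ρ : Fin K → ℂ, ∀ p, ‖ρ p‖ ≤
      C * ‖(fun i : {j : Fin N // j ∈ Ω} => ∑ k, ρ k * atom N (f k) (i : Fin N))‖ := by
  classical
  set Φ : (Fin K → ℂ) →ₗ[ℂ] ({j : Fin N // j ∈ Ω} → ℂ) :=
    { toFun := fun ρ => fun i => ∑ k, ρ k * atom N (f k) (i : Fin N)
      map_add' := by
        intro ρ ρ'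
        funext i
        simp [add_mul, Finset.sum_add_distrib]
      map_smul' := by
        intro a ρ
        funext i
        simp [Finset.mul_sum, smul_eq_mul, mul_assoc] } with hΦ
  have hker : LinearMap.ker Φ = ⊥ := by
    rw [LinearMap.ker_eq_bot']
    intro ρ hρ
    have := Fintype.linearIndependent_iff.mp hLI ρ ?_
    · funext p; exact this p
    · funext i
      have := congrFun hρ i
      simpa [hΦ] using this
  obtain ⟨C, hC, hA⟩ := Φ.exists_antilipschitzWith hker
  refine ⟨C, hC, fun ρ p => ?_⟩
  have h1 : ‖ρ p‖ ≤ ‖ρ‖ := norm_le_pi_norm ρ p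
  have h2 : ‖ρ‖ ≤ C * ‖Φ ρ‖ := by
    have := hA.le_mul_dist ρ 0
    simpa [dist_zero_right, map_zero] using this
  calc ‖ρ p‖ = ‖ρ p‖ := rfl
    _ ≤ ‖ρ‖ := h1
    _ ≤ C * ‖Φ ρ‖ := h2
    _ = C * ‖(fun i : {j : Fin N // j ∈ Ω} => ∑ k, ρ k * atom N (f k) (i : Fin N))‖ := rfl

lemma sum_rotate' {ιa ιb ιc : Type*} [Fintype ιa] [Fintype ιb] [Fintype ιc]
    (A : ιa → ιb → ιc → ℂ) :
    ∑ a, ∑ b, ∑ c, A a b c = ∑ c, ∑ a, ∑ b, A a b c :=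
  (Finset.sum_congr rfl fun a _ => Finset.sum_comm).trans Finset.sum_comm

lemma pair_decomp' (N L m : ℕ) (V Y : Matrix (Fin N) (Fin L) ℂ)
    (c' g : Fin m → ℝ) (φ' : Fin m → Fin L → ℂ)
    (hY : ∀ j l, Y j l = ∑ k, (c' k : ℂ) * atom N (g k) j * φ' k l) :
    ∑ l, ∑ j, (starRingEnd ℂ) (V j l) * Y j l
      = ∑ k, (c' k : ℂ) * ∑ l, (starRingEnd ℂ) (Qpoly N L V (g k) l) * φ' k l := by
  calc ∑ l, ∑ j, (starRingEnd ℂ) (V j l) * Y j l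
      = ∑ l, ∑ j, ∑ k, (starRingEnd ℂ) (V j l) *
          ((c' k : ℂ) * atom N (g k) j * φ' k l) := by
        apply Finset.sum_congr rfl; intro l _
        apply Finset.sum_congr rfl; intro j _
        rw [hY j l, Finset.mul_sum]
    _ = ∑ k, ∑ l, ∑ j, (starRingEnd ℂ) (V j l) *
          ((c' k : ℂ) * atom N (g k) j * φ' k l) := sum_rotate' _
    _ = ∑ k, (c' k : ℂ) * ∑ l, (starRingEnd ℂ) (Qpoly N L V (g k) l) * φ' k l := by
        apply Finset.sum_congr rfl
        intro k _
        rw [Finset.mul_sum]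
        apply Finset.sum_congr rfl
        intro l _
        simp only [Qpoly, map_sum, _root_.map_mul, Complex.conj_conj, Finset.sum_mul]
        rw [Finset.mul_sum]
        apply Finset.sum_congr rfl
        intro j _
        ring

lemma abs_le_one_of_unit' {L : ℕ} (φ : Fin L → ℂ) (h : ∑ l, Complex.normSq (φ l) = 1)
    (l : Fin L) : ‖φ l‖ ≤ 1 := by
  have h1 : Complex.normSq (φ l) ≤ 1 := by
    rw [← h]
    exact Finset.single_le_sum (fun i _ => Complex.normSq_nonneg _) (Finset.mem_univ l)
  rw [Complex.norm_def]
  calc Real.sqrt (Complex.normSq (φ l)) ≤ Real.sqrt 1 := Real.sqrt_le_sqrt h1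
    _ = 1 := Real.sqrt_one

lemma vnorm_one_of' {L : ℕ} (φ : Fin L → ℂ) (h : ∑ l, Complex.normSq (φ l) = 1) :
    vnorm φ = 1 := by unfold vnorm; rw [h]; exact Real.sqrt_one

lemma abs_diff_le_dAtom' (N : ℕ) (g y : ℝ) (i : Fin N) :
    ‖atom N g i - atom N y i‖ ≤ dAtom N g y := by
  unfold dAtom
  exact Finset.single_le_sum (f := fun i => ‖atom N g i - atom N y i‖)
    (fun i _ => norm_nonneg _) (Finset.mem_univ i)

end AuxDualCert

set_option maxHeartbeats 2000000 in
/-- Dual certificate proposition: if `{a_Ω(f_k)}` are linearly independent and there is a dual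
polynomial `Q(f) = a(f)ᴴV` with `Q(f_k) = φ_k`, `‖Q(f)‖₂ < 1` off the support, and `V` supported
on the rows indexed by `Ω`, then `Y^o` is the unique minimizer of the atomic norm problem and
its atomic decomposition is unique, with `‖Y^o‖_A = ∑ c_k`. -/
theorem dual_certificate_exact_recovery (N L K : ℕ) (hN : 0 < N) (hL : 0 < L) (hK : 0 < K)
    (f : Fin K → ℝ) (hf : ∀ k, f k ∈ Set.Ico (0 : ℝ) 1) (hinj : Function.Injective f)
    (c : Fin K → ℝ) (hc : ∀ k, 0 < c k)
    (φ : Fin K → Fin L → ℂ) (hφ : ∀ k, ∑ l, Complex.normSq (φ k l) = 1)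
    (Ω : Finset (Fin N))
    (hLI : LinearIndependent ℂ fun k : Fin K => fun j : {j : Fin N // j ∈ Ω} =>
      atom N (f k) (j : Fin N))
    (V : Matrix (Fin N) (Fin L) ℂ)
    (hQeq : ∀ k, (fun l => ∑ j, (starRingEnd ℂ) (atom N (f k) j) * V j l) = φ k)
    (hQlt : ∀ g ∈ Set.Ico (0 : ℝ) 1, g ∉ Set.range f →
      vnorm (fun l => ∑ j, (starRingEnd ℂ) (atom N g j) * V j l) < 1)
    (hVz : ∀ j : Fin N, j ∉ Ω → ∀ l, V j l = 0) :
    ExactRecovery N L K f c φ Ω (fun j l => ∑ k, (c k : ℂ) * atom N (f k) j * φ k l) := by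
  classical
  set Yo : Matrix (Fin N) (Fin L) ℂ := fun j l => ∑ k, (c k : ℂ) * atom N (f k) j * φ k l
    with hYo
  have hQf : ∀ k, Qpoly N L V (f k) = φ k := hQeq
  have hQlt' : ∀ g ∈ Set.Ico (0 : ℝ) 1, g ∉ Set.range f → vnorm (Qpoly N L V g) < 1 := hQlt
  have hvφ : ∀ k, vnorm (φ k) = 1 := fun k => vnorm_one_of' _ (hφ k)
  have hQle : ∀ g ∈ Set.Ico (0:ℝ) 1, vnorm (Qpoly N L V g) ≤ 1 := by
    intro g hg
    by_cases hr : g ∈ Set.range f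
    · obtain ⟨k, rfl⟩ := hr
      rw [hQf k, hvφ k]
    · exact (hQlt' g hg hr).le
  have hYodec : IsAtomicDecomp N L Yo c f φ :=
    ⟨hc, hf, hφ, fun j l => rfl⟩
  have pairYo : ∑ l, ∑ j, (starRingEnd ℂ) (V j l) * Yo j l = ((∑ k, c k : ℝ) : ℂ) := by
    rw [pair_decomp' N L K V Yo c f φ (fun j l => rfl)]
    push_cast
    apply Finset.sum_congr rfl
    intro k _
    have hS1 : (∑ l, (starRingEnd ℂ) (Qpoly N L V (f k) l) * φ k l) = 1 := by
      have e1 : ∀ l ∈ Finset.univ, (starRingEnd ℂ) (Qpoly N L V (f k) l) * φ k l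
          = ((Complex.normSq (φ k l) : ℝ) : ℂ) := by
        intro l _
        rw [hQf k, mul_comm, Complex.mul_conj]
      rw [Finset.sum_congr rfl e1, ← Complex.ofReal_sum, hφ k, Complex.ofReal_one]
    rw [hS1, mul_one]
  have pairFeas : ∀ Y : Matrix (Fin N) (Fin L) ℂ, (∀ j ∈ Ω, ∀ l, Y j l = Yo j l) →
      ∑ l, ∑ j, (starRingEnd ℂ) (V j l) * Y j l = ((∑ k, c k : ℝ) : ℂ) := by
    intro Y hfeas
    rw [← pairYo]
    refine Finset.sum_congr rfl fun l _ => Finset.sum_congr rfl fun j _ => ?_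
    by_cases hj : j ∈ Ω
    · rw [hfeas j hj l]
    · rw [hVz j hj l]
      simp
  have fund : ∀ (Y : Matrix (Fin N) (Fin L) ℂ), (∀ j ∈ Ω, ∀ l, Y j l = Yo j l) →
      ∀ (m : ℕ) (c' g' : Fin m → ℝ) (φ' : Fin m → Fin L → ℂ),
      IsAtomicDecomp N L Y c' g' φ' →
      (∑ p, c p) + ∑ k, c' k * (1 - vnorm (Qpoly N L V (g' k))) ≤ ∑ k, c' k := by
    rintro Y hfeas m c' g' φ' ⟨hc', hg', hφ', hYdec⟩
    have e1 : ((∑ p, c p : ℝ) : ℂ)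
        = ∑ k, (c' k : ℂ) * ∑ l, (starRingEnd ℂ) (Qpoly N L V (g' k) l) * φ' k l := by
      rw [← pair_decomp' N L m V Y c' g' φ' hYdec, pairFeas Y hfeas]
    have e2 : (∑ p, c p)
        = ∑ k, c' k * (∑ l, (starRingEnd ℂ) (Qpoly N L V (g' k) l) * φ' k l).re := by
      have := congrArg Complex.re e1
      simpa [Complex.re_sum, Complex.ofReal_re] using this
    have e3 : ∀ k, (∑ l, (starRingEnd ℂ) (Qpoly N L V (g' k) l) * φ' k l).re
        ≤ vnorm (Qpoly N L V (g' k)) := by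
      intro k
      calc (∑ l, (starRingEnd ℂ) (Qpoly N L V (g' k) l) * φ' k l).re
          ≤ vnorm (Qpoly N L V (g' k)) * vnorm (φ' k) := cauchy_re' _ _
        _ = vnorm (Qpoly N L V (g' k)) := by rw [vnorm_one_of' _ (hφ' k), mul_one]
    have e4 : (∑ p, c p) ≤ ∑ k, c' k * vnorm (Qpoly N L V (g' k)) := by
      rw [e2]
      exact Finset.sum_le_sum fun k _ => mul_le_mul_of_nonneg_left (e3 k) (hc' k).le
    have e5 : ∑ k, c' k * vnorm (Qpoly N L V (g' k))
        = (∑ k, c' k) - ∑ k, c' k * (1 - vnorm (Qpoly N L V (g' k))) := by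
      rw [← Finset.sum_sub_distrib]
      apply Finset.sum_congr rfl
      intro k _
      ring
    rw [e5] at e4
    linarith
  have hgapnn : ∀ {m : ℕ} (c' g' : Fin m → ℝ) (φ' : Fin m → Fin L → ℂ),
      IsAtomicDecomp N L Yo c' g' φ' → True := fun _ _ _ _ => trivial
  have htermnn : ∀ {m : ℕ} (c' g' : Fin m → ℝ), (∀ k, 0 < c' k) →
      (∀ k, g' k ∈ Set.Ico (0:ℝ) 1) →
      0 ≤ ∑ k, c' k * (1 - vnorm (Qpoly N L V (g' k))) := by
    intro m c' g' hc' hg'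
    apply Finset.sum_nonneg
    intro k _
    have := hQle (g' k) (hg' k)
    exact mul_nonneg (hc' k).le (by linarith)
  have hlower : ∀ (Y : Matrix (Fin N) (Fin L) ℂ), (∀ j ∈ Ω, ∀ l, Y j l = Yo j l) →
      ∀ t ∈ {t : ℝ | ∃ (m : ℕ) (c' fr' : Fin m → ℝ) (φ' : Fin m → Fin L → ℂ),
        IsAtomicDecomp N L Y c' fr' φ' ∧ t = ∑ k, c' k}, (∑ k, c k) ≤ t := by
    rintro Y hfeas t ⟨m, c', g', φ', hd, rfl⟩
    have h1 := fund Y hfeas m c' g' φ' hd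
    have h2 := htermnn c' g' hd.1 hd.2.1
    linarith
  have hbdd : ∀ (Y : Matrix (Fin N) (Fin L) ℂ),
      BddBelow {t : ℝ | ∃ (m : ℕ) (c' fr' : Fin m → ℝ) (φ' : Fin m → Fin L → ℂ),
        IsAtomicDecomp N L Y c' fr' φ' ∧ t = ∑ k, c' k} := by
    intro Y
    refine ⟨0, ?_⟩
    rintro t ⟨m, c', g', φ', hd, rfl⟩
    exact Finset.sum_nonneg fun k _ => (hd.1 k).le
  have hmemYo : (∑ k, c k) ∈ {t : ℝ | ∃ (m : ℕ) (c' fr' : Fin m → ℝ)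
      (φ' : Fin m → Fin L → ℂ), IsAtomicDecomp N L Yo c' fr' φ' ∧ t = ∑ k, c' k} :=
    ⟨K, c, f, φ, hYodec, rfl⟩
  have hAYo : atomicNorm N L Yo = ∑ k, c k := by
    apply le_antisymm
    · exact csInf_le (hbdd Yo) hmemYo
    · exact le_csInf ⟨_, hmemYo⟩ (hlower Yo (fun j _ l => rfl))
  refine ⟨?_, hAYo, ?_⟩
  · intro Y hfeas hne
    rw [hAYo]
    have hex : ∃ i0 l0, Y i0 l0 ≠ Yo i0 l0 := by
      by_contra hco
      push_neg at hco
      apply hne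
      funext i l
      exact hco i l
    obtain ⟨i0, l0, hne0⟩ := hex
    have hε0pos : 0 < ‖Y i0 l0 - Yo i0 l0‖ :=
      norm_pos_iff.mpr (sub_ne_zero.mpr hne0)
    set ε0 := ‖Y i0 l0 - Yo i0 l0‖ with hε0
    obtain ⟨C, hC, hCb⟩ := antilip' N K f Ω hLI
    set B : ℝ := (∑ k, c k) + 1 with hB
    have hsumc : 0 ≤ ∑ k, c k := Finset.sum_nonneg fun k _ => (hc k).le
    have hBpos : 0 < B := by rw [hB]; linarith
    set Cf : ℝ := (K : ℝ) * C + 1 with hCf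
    have hCfpos : 0 < Cf := by
      have : 0 ≤ (K:ℝ) * C := mul_nonneg (Nat.cast_nonneg K) hC.le
      rw [hCf]; linarith
    set δ : ℝ := ε0 / (2 * Cf * B) with hδdef
    have hδpos : 0 < δ := by
      rw [hδdef]
      exact div_pos hε0pos (mul_pos (mul_pos two_pos hCfpos) hBpos)
    obtain ⟨η, hηpos, hηfar⟩ := near_or_far' N L K V f hQlt' hδpos
    set gs : ℝ := min 1 (η * ε0 / (2 * Cf)) with hgs
    have hgspos : 0 < gs := by
      rw [hgs]
      exact lt_min one_pos (div_pos (mul_pos hηpos hε0pos) (mul_pos two_pos hCfpos))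
    have key : ∀ t ∈ {t : ℝ | ∃ (m : ℕ) (c' fr' : Fin m → ℝ) (φ' : Fin m → Fin L → ℂ),
        IsAtomicDecomp N L Y c' fr' φ' ∧ t = ∑ k, c' k}, (∑ k, c k) + gs ≤ t := by
      rintro t ⟨m, c', g', φ', ⟨hc', hg', hφ', hYdec⟩, rfl⟩
      have hfund := fund Y hfeas m c' g' φ' ⟨hc', hg', hφ', hYdec⟩
      set gap : ℝ := (∑ k, c' k) - ∑ k, c k with hgap
      have hgapge : ∑ k, c' k * (1 - vnorm (Qpoly N L V (g' k))) ≤ gap := by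
        rw [hgap]; linarith
      have hgapnn : 0 ≤ gap := le_trans (htermnn c' g' hc' hg') hgapge
      suffices hgg : gs ≤ gap by rw [hgap] at hgg; linarith
      rcases le_or_gt 1 gap with hbig | hsmall
      · exact le_trans (min_le_left _ _) hbig
      refine le_trans (min_le_right _ _) ?_
      set far : Fin m → Prop := fun k => ∀ p, δ ≤ dAtom N (g' k) (f p) with hfardef
      set Tf := Finset.univ.filter far with hTf
      set Tn := Finset.univ.filter (fun k => ¬ far k) with hTn
      have hQnn : ∀ k : Fin m, 0 ≤ 1 - vnorm (Qpoly N L V (g' k)) := by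
        intro k
        have := hQle (g' k) (hg' k)
        linarith
      have hfarh : ∀ k, far k → η ≤ 1 - vnorm (Qpoly N L V (g' k)) := fun k hk =>
        hηfar (g' k) (Set.Ico_subset_Icc_self (hg' k)) hk
      have hMfar : η * (∑ k ∈ Tf, c' k) ≤ gap := by
        calc η * ∑ k ∈ Tf, c' k = ∑ k ∈ Tf, c' k * η := by
              rw [Finset.mul_sum]
              exact Finset.sum_congr rfl fun k _ => mul_comm _ _
          _ ≤ ∑ k ∈ Tf, c' k * (1 - vnorm (Qpoly N L V (g' k))) :=
              Finset.sum_le_sum fun k hk => mul_le_mul_of_nonneg_left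
                (hfarh k (Finset.mem_filter.mp hk).2) (hc' k).le
          _ ≤ ∑ k, c' k * (1 - vnorm (Qpoly N L V (g' k))) :=
              Finset.sum_le_sum_of_subset_of_nonneg (Finset.filter_subset _ _)
                (fun k _ _ => mul_nonneg (hc' k).le (hQnn k))
          _ ≤ gap := hgapge
      have hMfar' : ∑ k ∈ Tf, c' k ≤ gap / η := by
        rw [le_div_iff₀ hηpos]
        calc (∑ k ∈ Tf, c' k) * η = η * ∑ k ∈ Tf, c' k := mul_comm _ _
          _ ≤ gap := hMfar
      have hMnear : ∑ k ∈ Tn, c' k ≤ B := by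
        have h1 : ∑ k ∈ Tn, c' k ≤ ∑ k, c' k :=
          Finset.sum_le_sum_of_subset_of_nonneg (Finset.filter_subset _ _)
            (fun k _ _ => (hc' k).le)
        have h2 : ∑ k, c' k = (∑ k, c k) + gap := by rw [hgap]; ring
        rw [hB]
        linarith
      set pk : Fin m → Fin K := fun k =>
        if h : ∃ p, dAtom N (g' k) (f p) < δ then h.choose else ⟨0, hK⟩ with hpk
      have hpk_near : ∀ k, ¬ far k → dAtom N (g' k) (f (pk k)) < δ := by
        intro k hk
        have hex' : ∃ p, dAtom N (g' k) (f p) < δ := by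
          by_contra hno
          push_neg at hno
          exact hk hno
        simp only [hpk]
        rw [dif_pos hex']
        exact hex'.choose_spec
      set bnd : ℝ := B * δ + gap / η with hbnd
      have hbndnn : 0 ≤ bnd := by
        rw [hbnd]
        exact add_nonneg (mul_nonneg hBpos.le hδpos.le) (div_nonneg hgapnn hηpos.le)
      set W : Fin K → Fin L → ℂ := fun p l => ∑ k ∈ Tn.filter (fun k => pk k = p),
        (c' k : ℂ) * φ' k l with hW
      have hfiber : ∀ (i : Fin N) (l : Fin L), ∑ p, atom N (f p) i * W p l
          = ∑ k ∈ Tn, (c' k : ℂ) * atom N (f (pk k)) i * φ' k l := by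
        intro i l
        have e1 : ∀ p ∈ Finset.univ, atom N (f p) i * W p l
            = ∑ k ∈ Tn.filter (fun k => pk k = p),
                (c' k : ℂ) * atom N (f (pk k)) i * φ' k l := by
          intro p _
          simp only [hW]
          rw [Finset.mul_sum]
          apply Finset.sum_congr rfl
          intro k hk
          rw [(Finset.mem_filter.mp hk).2]
          ring
        rw [Finset.sum_congr rfl e1, Finset.sum_fiberwise]
      set E : Fin N → Fin L → ℂ := fun i l => Y i l - ∑ p, atom N (f p) i * W p l with hE
      have hEsplit : ∀ i l, E i l
          = (∑ k ∈ Tn, (c' k:ℂ) * (atom N (g' k) i - atom N (f (pk k)) i) * φ' k l)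
            + ∑ k ∈ Tf, (c' k:ℂ) * atom N (g' k) i * φ' k l := by
        intro i l
        have hsplit0 : ∑ k, (c' k:ℂ) * atom N (g' k) i * φ' k l
            = (∑ k ∈ Tf, (c' k:ℂ) * atom N (g' k) i * φ' k l)
              + ∑ k ∈ Tn, (c' k:ℂ) * atom N (g' k) i * φ' k l := by
          rw [hTf, hTn]
          exact (Finset.sum_filter_add_sum_filter_not Finset.univ far _).symm
        have e2 : ∑ k ∈ Tn, (c' k:ℂ) * atom N (g' k) i * φ' k l
              - ∑ k ∈ Tn, (c' k:ℂ) * atom N (f (pk k)) i * φ' k l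
            = ∑ k ∈ Tn, (c' k:ℂ) * (atom N (g' k) i - atom N (f (pk k)) i) * φ' k l := by
          rw [← Finset.sum_sub_distrib]
          apply Finset.sum_congr rfl
          intro k _
          ring
        simp only [hE]
        rw [hYdec i l, hfiber i l, hsplit0, ← e2]
        ring
      have hEbound : ∀ i l, ‖E i l‖ ≤ bnd := by
        intro i l
        rw [hEsplit i l]
        have b1 : ‖
              (∑ k ∈ Tn, (c' k:ℂ) * (atom N (g' k) i - atom N (f (pk k)) i) * φ' k l)‖
            ≤ ∑ k ∈ Tn, c' k * δ := by
          refine le_trans (norm_sum_le _ _) (Finset.sum_le_sum ?_)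
          intro k hk
          rw [norm_mul, norm_mul, Complex.norm_real, Real.norm_eq_abs, abs_of_pos (hc' k)]
          have h1 : ‖atom N (g' k) i - atom N (f (pk k)) i‖ ≤ δ :=
            le_of_lt (lt_of_le_of_lt (abs_diff_le_dAtom' N (g' k) (f (pk k)) i)
              (hpk_near k (Finset.mem_filter.mp hk).2))
          have h2 : ‖φ' k l‖ ≤ 1 := abs_le_one_of_unit' (φ' k) (hφ' k) l
          calc c' k * ‖atom N (g' k) i - atom N (f (pk k)) i‖
                * ‖φ' k l‖
              ≤ c' k * δ * 1 := by
                apply mul_le_mul (mul_le_mul_of_nonneg_left h1 (hc' k).le) h2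
                  (norm_nonneg _) (mul_nonneg (hc' k).le hδpos.le)
            _ = c' k * δ := by ring
        have b2 : ‖∑ k ∈ Tf, (c' k:ℂ) * atom N (g' k) i * φ' k l‖
            ≤ ∑ k ∈ Tf, c' k := by
          refine le_trans (norm_sum_le _ _) (Finset.sum_le_sum ?_)
          intro k hk
          rw [norm_mul, norm_mul, Complex.norm_real, Real.norm_eq_abs, abs_of_pos (hc' k),
            abs_atom', mul_one]
          calc c' k * ‖φ' k l‖ ≤ c' k * 1 :=
                mul_le_mul_of_nonneg_left (abs_le_one_of_unit' (φ' k) (hφ' k) l) (hc' k).le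
            _ = c' k := mul_one _
        refine le_trans (norm_add_le _ _) ?_
        refine le_trans (add_le_add b1 b2) ?_
        rw [hbnd]
        refine add_le_add ?_ hMfar'
        rw [← Finset.sum_mul]
        exact mul_le_mul_of_nonneg_right hMnear hδpos.le
      have hrho : ∀ l p, ‖W p l - (c p : ℂ) * φ p l‖ ≤ C * bnd := by
        intro l p
        have hnormb : ‖(fun i : {j : Fin N // j ∈ Ω} =>
            ∑ q, (W q l - (c q : ℂ) * φ q l) * atom N (f q) (i : Fin N))‖ ≤ bnd := by
          rw [pi_norm_le_iff_of_nonneg hbndnn]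
          intro i
          have hid : ∑ q, (W q l - (c q : ℂ) * φ q l) * atom N (f q) (i : Fin N)
              = - E (i : Fin N) l := by
            have hYi : Y (i : Fin N) l = Yo (i : Fin N) l := hfeas i i.2 l
            simp only [hE]
            have e1 : ∑ q, (W q l - (c q : ℂ) * φ q l) * atom N (f q) (i : Fin N)
                = (∑ q, atom N (f q) (i:Fin N) * W q l)
                  - ∑ q, (c q : ℂ) * atom N (f q) (i:Fin N) * φ q l := by
              rw [← Finset.sum_sub_distrib]
              apply Finset.sum_congr rfl
              intro q _
              ring
            rw [e1]
            have e2 : Yo (i : Fin N) l = ∑ q, (c q : ℂ) * atom N (f q) (i:Fin N) * φ q l := rfl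
            rw [hYi, e2]
            ring
          rw [hid, norm_neg]
          exact hEbound (i : Fin N) l
        calc ‖W p l - (c p : ℂ) * φ p l‖
            ≤ C * ‖(fun i : {j : Fin N // j ∈ Ω} =>
                ∑ q, (W q l - (c q : ℂ) * φ q l) * atom N (f q) (i : Fin N))‖ :=
              hCb (fun q => W q l - (c q : ℂ) * φ q l) p
          _ ≤ C * bnd := mul_le_mul_of_nonneg_left hnormb hC.le
      have hid0 : Y i0 l0 - Yo i0 l0
          = (∑ p, (W p l0 - (c p : ℂ) * φ p l0) * atom N (f p) i0) + E i0 l0 := by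
        simp only [hE]
        have e1 : ∑ p, (W p l0 - (c p : ℂ) * φ p l0) * atom N (f p) i0
            = (∑ p, atom N (f p) i0 * W p l0)
              - ∑ p, (c p : ℂ) * atom N (f p) i0 * φ p l0 := by
          rw [← Finset.sum_sub_distrib]
          apply Finset.sum_congr rfl
          intro p _
          ring
        rw [e1]
        have e2 : Yo i0 l0 = ∑ p, (c p : ℂ) * atom N (f p) i0 * φ p l0 := rfl
        rw [e2]
        ring
      have hfinal : ε0 ≤ Cf * bnd := by
        have h1 : ‖Y i0 l0 - Yo i0 l0‖
            ≤ ‖∑ p, (W p l0 - (c p : ℂ) * φ p l0) * atom N (f p) i0‖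
              + ‖E i0 l0‖ := by
          rw [hid0]
          exact norm_add_le _ _
        have h2 : ‖∑ p, (W p l0 - (c p : ℂ) * φ p l0) * atom N (f p) i0‖
            ≤ ∑ _p : Fin K, C * bnd := by
          refine le_trans (norm_sum_le _ _) (Finset.sum_le_sum ?_)
          intro p _
          rw [norm_mul, abs_atom', mul_one]
          exact hrho l0 p
        have h3 : ∑ _p : Fin K, C * bnd = (K : ℝ) * (C * bnd) := by
          rw [Finset.sum_const, Finset.card_univ, Fintype.card_fin, nsmul_eq_mul]
        have h4 := hEbound i0 l0
        rw [hε0]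
        calc ‖Y i0 l0 - Yo i0 l0‖
            ≤ ‖∑ p, (W p l0 - (c p : ℂ) * φ p l0) * atom N (f p) i0‖
              + ‖E i0 l0‖ := h1
          _ ≤ (K:ℝ) * (C * bnd) + bnd := add_le_add (h2.trans h3.le) h4
          _ = Cf * bnd := by rw [hCf]; ring
      have hdist : Cf * bnd = Cf * (B * δ) + Cf * (gap / η) := by rw [hbnd]; ring
      have hCfB : Cf * (B * δ) = ε0 / 2 := by
        rw [hδdef]
        field_simp
      have h5 : ε0 / 2 ≤ Cf * (gap / η) := by
        rw [hdist, hCfB] at hfinal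
        linarith
      have h6 : (ε0 / 2) * η ≤ Cf * gap := by
        have e : Cf * (gap / η) = (Cf * gap) / η := by ring
        rw [e] at h5
        exact (le_div_iff₀ hηpos).mp h5
      rw [div_le_iff₀ (mul_pos two_pos hCfpos)]
      nlinarith [h6]
    have hYne : ∃ t0, t0 ∈ {t : ℝ | ∃ (m : ℕ) (c' fr' : Fin m → ℝ)
        (φ' : Fin m → Fin L → ℂ), IsAtomicDecomp N L Y c' fr' φ' ∧ t = ∑ k, c' k} := by
      obtain ⟨m0, c0, f0, φ0, hd0⟩ := exists_decomp' N L hN hL Y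
      exact ⟨∑ k, c0 k, ⟨m0, c0, f0, φ0, hd0, rfl⟩⟩
    calc ∑ k, c k < (∑ k, c k) + gs := by linarith
      _ ≤ atomicNorm N L Y := le_csInf hYne key
  · -- uniqueness of the decomposition
    rintro m c' g' φ' ⟨hc', hg', hφ', hYdec⟩ hinj' hsum
    have e1 : ((∑ p, c p : ℝ) : ℂ)
        = ∑ k, (c' k : ℂ) * ∑ l, (starRingEnd ℂ) (Qpoly N L V (g' k) l) * φ' k l := by
      rw [← pair_decomp' N L m V Yo c' g' φ' hYdec, pairYo]
    have e2 : (∑ p, c p)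
        = ∑ k, c' k * (∑ l, (starRingEnd ℂ) (Qpoly N L V (g' k) l) * φ' k l).re := by
      have := congrArg Complex.re e1
      simpa [Complex.re_sum, Complex.ofReal_re] using this
    have e3 : ∀ k, (∑ l, (starRingEnd ℂ) (Qpoly N L V (g' k) l) * φ' k l).re
        ≤ vnorm (Qpoly N L V (g' k)) := by
      intro k
      calc (∑ l, (starRingEnd ℂ) (Qpoly N L V (g' k) l) * φ' k l).re
          ≤ vnorm (Qpoly N L V (g' k)) * vnorm (φ' k) := cauchy_re' _ _
        _ = vnorm (Qpoly N L V (g' k)) := by rw [vnorm_one_of' _ (hφ' k), mul_one]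
    have hre1 : ∀ k, (∑ l, (starRingEnd ℂ) (Qpoly N L V (g' k) l) * φ' k l).re = 1 := by
      have hzero : ∑ k, c' k * (1 - (∑ l, (starRingEnd ℂ) (Qpoly N L V (g' k) l) * φ' k l).re)
          = 0 := by
        have expand : ∑ k, c' k * (1 - (∑ l, (starRingEnd ℂ) (Qpoly N L V (g' k) l) * φ' k l).re)
            = (∑ k, c' k) - ∑ k, c' k * (∑ l, (starRingEnd ℂ) (Qpoly N L V (g' k) l) * φ' k l).re := by
          rw [← Finset.sum_sub_distrib]
          apply Finset.sum_congr rfl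
          intro k _
          ring
        rw [expand, ← e2, hsum]
        ring
      have hterm : ∀ k ∈ Finset.univ,
          0 ≤ c' k * (1 - (∑ l, (starRingEnd ℂ) (Qpoly N L V (g' k) l) * φ' k l).re) := by
        intro k _
        have h1 := e3 k
        have h2 := hQle (g' k) (hg' k)
        exact mul_nonneg (hc' k).le (by linarith)
      intro k
      have := (Finset.sum_eq_zero_iff_of_nonneg hterm).mp hzero k (Finset.mem_univ k)
      have h3 := (hc' k).ne'
      have h4 : 1 - (∑ l, (starRingEnd ℂ) (Qpoly N L V (g' k) l) * φ' k l).re = 0 := by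
        rcases mul_eq_zero.mp this with h | h
        · exact absurd h h3
        · exact h
      linarith
    have hrange : ∀ k, g' k ∈ Set.range f := by
      intro k
      by_contra hr
      have := hQlt' (g' k) (hg' k) hr
      have h1 := hre1 k
      have h2 := e3 k
      linarith
    choose jmap hjmap using hrange
    have hjinj : Function.Injective jmap := by
      intro k k' hkk
      apply hinj'
      rw [← hjmap k, ← hjmap k', hkk]
    have hφeq : ∀ k, φ' k = φ (jmap k) := by
      intro k
      have hQk : Qpoly N L V (g' k) = φ (jmap k) := by
        rw [← hjmap k]
        exact hQf (jmap k)
      have hsum0 : ∑ l, Complex.normSq (φ (jmap k) l - φ' k l) = 0 := by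
        have expand : ∀ l ∈ Finset.univ, Complex.normSq (φ (jmap k) l - φ' k l)
            = Complex.normSq (φ (jmap k) l) + Complex.normSq (φ' k l)
              - 2 * ((starRingEnd ℂ) (φ (jmap k) l) * φ' k l).re := by
          intro l _
          rw [Complex.normSq_sub]
          have : (φ (jmap k) l * (starRingEnd ℂ) (φ' k l)).re
              = ((starRingEnd ℂ) (φ (jmap k) l) * φ' k l).re := by
            simp only [Complex.mul_re, Complex.conj_re, Complex.conj_im]
            ring
          rw [this]
        rw [Finset.sum_congr rfl expand]
        have hre : ∑ l, ((starRingEnd ℂ) (φ (jmap k) l) * φ' k l).re = 1 := by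
          have := hre1 k
          rw [hQk] at this
          rw [Complex.re_sum] at this
          exact this
        have hsplit : ∑ l, (Complex.normSq (φ (jmap k) l) + Complex.normSq (φ' k l)
              - 2 * ((starRingEnd ℂ) (φ (jmap k) l) * φ' k l).re)
            = (∑ l, Complex.normSq (φ (jmap k) l)) + (∑ l, Complex.normSq (φ' k l))
              - 2 * ∑ l, ((starRingEnd ℂ) (φ (jmap k) l) * φ' k l).re := by
          rw [Finset.sum_sub_distrib, Finset.sum_add_distrib, Finset.mul_sum]
        rw [hsplit, hφ (jmap k), hφ' k, hre]
        ring
      funext l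
      have := (Finset.sum_eq_zero_iff_of_nonneg
        (fun l _ => Complex.normSq_nonneg (φ (jmap k) l - φ' k l))).mp hsum0 l (Finset.mem_univ l)
      have := Complex.normSq_eq_zero.mp this
      have := sub_eq_zero.mp this
      exact this.symm
    -- regroup and use linear independence to show `jmap` is surjective and coefficients match
    set dsum : Fin K → ℝ := fun p => ∑ k ∈ Finset.univ.filter (fun k => jmap k = p), c' k
      with hdsum
    have hgroup : ∀ i l, Yo i l = ∑ p, ((dsum p : ℝ) : ℂ) * atom N (f p) i * φ p l := by
      intro i l
      rw [hYdec i l]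
      have e1' : ∀ k ∈ Finset.univ, (c' k : ℂ) * atom N (g' k) i * φ' k l
          = (c' k : ℂ) * atom N (f (jmap k)) i * φ (jmap k) l := by
        intro k _
        rw [← hjmap k, hφeq k]
      rw [Finset.sum_congr rfl e1']
      rw [← Finset.sum_fiberwise Finset.univ jmap
        (fun k => (c' k : ℂ) * atom N (f (jmap k)) i * φ (jmap k) l)]
      apply Finset.sum_congr rfl
      intro p _
      rw [hdsum]
      push_cast
      rw [Finset.sum_mul, Finset.sum_mul]
      apply Finset.sum_congr rfl
      intro k hk
      rw [(Finset.mem_filter.mp hk).2]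
    have hcoef : ∀ p, ((dsum p : ℝ) : ℂ) = (c p : ℂ) := by
      have hli := Fintype.linearIndependent_iff.mp hLI
      have hcol : ∀ l p, (((dsum p : ℝ) : ℂ) - (c p : ℂ)) * φ p l = 0 := by
        intro l p
        refine hli (fun p => (((dsum p : ℝ) : ℂ) - (c p : ℂ)) * φ p l) ?_ p
        funext i
        have h1 : Yo (i : Fin N) l = ∑ p, ((dsum p : ℝ) : ℂ) * atom N (f p) (i : Fin N) * φ p l :=
          hgroup i l
        have h2 : Yo (i : Fin N) l = ∑ p, (c p : ℂ) * atom N (f p) (i : Fin N) * φ p l := rfl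
        have h3 : ∑ p, (((dsum p : ℝ) : ℂ) - (c p : ℂ)) * φ p l * atom N (f p) (i : Fin N)
            = 0 := by
          have : ∑ p, (((dsum p : ℝ) : ℂ) - (c p : ℂ)) * φ p l * atom N (f p) (i : Fin N)
              = (∑ p, ((dsum p : ℝ) : ℂ) * atom N (f p) (i : Fin N) * φ p l)
                - ∑ p, (c p : ℂ) * atom N (f p) (i : Fin N) * φ p l := by
            rw [← Finset.sum_sub_distrib]
            apply Finset.sum_congr rfl
            intro p _
            ring
          rw [this, ← h1, ← h2]
          ring
        simpa using h3
      intro p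
      have hex : ∃ l, φ p l ≠ 0 := by
        by_contra hno
        push_neg at hno
        have : ∑ l, Complex.normSq (φ p l) = 0 := by
          apply Finset.sum_eq_zero
          intro l _
          rw [hno l]
          simp
        rw [hφ p] at this
        norm_num at this
      obtain ⟨l, hl⟩ := hex
      have := hcol l p
      rcases mul_eq_zero.mp this with h | h
      · exact sub_eq_zero.mp h
      · exact absurd h hl
    have hcoefR : ∀ p, dsum p = c p := by
      intro p
      exact_mod_cast hcoef p
    have hjsurj : Function.Surjective jmap := by
      intro p
      by_contra hno
      push_neg at hno
      have : dsum p = 0 := by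
        rw [hdsum]
        apply Finset.sum_eq_zero
        intro k hk
        exact absurd (Finset.mem_filter.mp hk).2 (hno k)
      rw [hcoefR p] at this
      exact absurd this (hc p).ne'
    have hceq : ∀ k, c' k = c (jmap k) := by
      intro k
      have hfilter : Finset.univ.filter (fun k' => jmap k' = jmap k) = {k} := by
        ext k'
        simp only [Finset.mem_filter, Finset.mem_univ, true_and, Finset.mem_singleton]
        constructor
        · exact fun h => hjinj h
        · rintro rfl; rfl
      have : dsum (jmap k) = c' k := by
        simp only [hdsum]
        rw [hfilter, Finset.sum_singleton]
      rw [← this, hcoefR]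
    exact ⟨Equiv.ofBijective jmap ⟨hjinj, hjsurj⟩, fun k =>
      ⟨(hjmap k).symm, hceq k, hφeq k⟩⟩
end

section
/- For every x ≥ 0 there is a unique y(x) ≥ 1 satisfying y(x) − log y(x) − 1 = x. The function x ↦ y(x) is monotonically increasing on [0,∞), and for all x ≥ 0 it satisfies 1 + x ≤ y(x) ≤ 2(1 + x). -/
private lemma fmono : StrictMonoOn (fun y : ℝ => y - Real.log y - 1) (Set.Ici 1) := by
  intro a ha b hb hab
  simp only [Set.mem_Ici] at ha hb
  have ha0 : (0:ℝ) < a := lt_of_lt_of_le one_pos ha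
  have hb0 : (0:ℝ) < b := lt_of_lt_of_le one_pos hb
  have h1 : Real.log b - Real.log a = Real.log (b / a) := (Real.log_div hb0.ne' ha0.ne').symm
  have h2 : Real.log (b / a) < b / a - 1 := by
    apply Real.log_lt_sub_one_of_pos (div_pos hb0 ha0)
    intro h
    have : b = a := by field_simp at h; linarith
    exact (ne_of_gt hab) this
  have h3 : b / a - 1 ≤ b - a := by
    have : b / a - 1 = (b - a) / a := by field_simp
    rw [this]
    exact div_le_self (by linarith) ha
  simp only
  linarith [h1 ▸ h2]

private lemma fcont : ContinuousOn (fun y : ℝ => y - Real.log y - 1) (Set.Ici 1) := by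
  apply ContinuousOn.sub _ continuousOn_const
  apply ContinuousOn.sub continuousOn_id
  apply Real.continuousOn_log.mono
  intro y hy
  simp only [Set.mem_Ici] at hy
  simp only [Set.mem_compl_iff, Set.mem_singleton_iff]
  linarith

/-- For every `x ≥ 0` there is a unique `y ≥ 1` with `y - log y - 1 = x`; the resulting function
`x ↦ y(x)` is monotonically increasing and satisfies `1 + x ≤ y(x) ≤ 2(1 + x)`. -/
theorem unique_solution_y_sub_log_y
    : (∀ x : ℝ, 0 ≤ x → ∃! y : ℝ, 1 ≤ y ∧ y - Real.log y - 1 = x) ∧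
      (∀ Y : ℝ → ℝ, (∀ x : ℝ, 0 ≤ x → 1 ≤ Y x ∧ Y x - Real.log (Y x) - 1 = x) →
        StrictMonoOn Y (Set.Ici 0) ∧
        ∀ x : ℝ, 0 ≤ x → 1 + x ≤ Y x ∧ Y x ≤ 2 * (1 + x)) := by
  set f := fun y : ℝ => y - Real.log y - 1 with hf
  -- key value estimates
  have hfa : ∀ x : ℝ, 0 ≤ x → f (1 + x) ≤ x := by
    intro x hx
    have := Real.log_le_sub_one_of_pos (show (0:ℝ) < 1 + x by linarith)
    simp only [hf]
    linarith [Real.log_nonneg (show (1:ℝ) ≤ 1 + x by linarith)]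
  have hfb : ∀ x : ℝ, 0 ≤ x → x ≤ f (2 * (1 + x)) := by
    intro x hx
    have h1 : Real.log (2 * (1 + x)) = Real.log 2 + Real.log (1 + x) :=
      Real.log_mul two_ne_zero (by linarith)
    have h2 : Real.log (1 + x) ≤ x := by
      have := Real.log_le_sub_one_of_pos (show (0:ℝ) < 1 + x by linarith)
      linarith
    have h3 : Real.log 2 < 1 := by
      have := Real.log_lt_sub_one_of_pos two_pos (by norm_num)
      linarith
    simp only [hf]
    linarith
  -- existence
  have hexists : ∀ x : ℝ, 0 ≤ x → ∃ y ∈ Set.Icc (1 + x) (2 * (1 + x)), f y = x := by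
    intro x hx
    have hab : (1 + x) ≤ 2 * (1 + x) := by linarith
    have hsub : Set.Icc (1 + x) (2 * (1 + x)) ⊆ Set.Ici 1 := by
      intro y hy; exact le_trans (by linarith) hy.1
    have := intermediate_value_Icc hab (fcont.mono hsub)
    obtain ⟨y, hy, hfy⟩ := this ⟨hfa x hx, hfb x hx⟩
    exact ⟨y, hy, hfy⟩
  constructor
  · intro x hx
    obtain ⟨y, hy, hfy⟩ := hexists x hx
    refine ⟨y, ⟨le_trans (by linarith) hy.1, hfy⟩, ?_⟩
    intro z ⟨hz1, hz2⟩
    exact fmono.injOn hz1 (Set.mem_Ici.2 (le_trans (by linarith) hy.1)) (by simpa [hf] using hz2.trans hfy.symm)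
  · intro Y hY
    have hmono : StrictMonoOn Y (Set.Ici 0) := by
      intro x1 hx1 x2 hx2 h12
      simp only [Set.mem_Ici] at hx1 hx2
      obtain ⟨hY1, hf1⟩ := hY x1 hx1
      obtain ⟨hY2, hf2⟩ := hY x2 hx2
      by_contra hle
      push_neg at hle
      have : f (Y x2) ≤ f (Y x1) := by
        rcases eq_or_lt_of_le hle with h | h
        · rw [h]
        · exact le_of_lt (fmono hY2 hY1 h)
      simp only [hf] at this
      linarith
    refine ⟨hmono, fun x hx => ?_⟩
    obtain ⟨hY1, hfY⟩ := hY x hx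
    constructor
    · by_contra h
      push_neg at h
      have h1 := fmono hY1 (Set.mem_Ici.2 (by linarith : (1:ℝ) ≤ 1 + x)) h
      have h2 := hfa x hx
      simp only [hf] at h1 h2
      linarith
    · by_contra h
      push_neg at h
      have h1 := fmono (Set.mem_Ici.2 (by linarith : (1:ℝ) ≤ 2 * (1 + x))) hY1 h
      have h2 := hfb x hx
      simp only [hf] at h1 h2
      linarith
end
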